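/- Let (ξ_k) be a sequence of random vectors in ℝ^d adapted to a filtration (F_k) with E[ξ_k | F_{k−1}] = 0 and E[‖ξ_k‖² | F_{k−1}] ≤ σ² almost surely. Define the weighted sum W_k = ∑_{i=0}^{k} (∏_{j=i+1}^{k} (1−β_j)) β_i ξ_i, where β_k = ι₂(k+1)^{−b₂} with ι₂ > 0 and b₂ ∈ (1/2, 1]. Then W_k → 0 almost surely as k → ∞. -/

import Mathlib

open MeasureTheory Filter Finset

open scoped ENNReal NNReal

set_option linter.unusedVariables false



private lemma prod_step (β : ℕ → ℝ) {i k : ℕ} (h : i < k) :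
    ∏ j ∈ Finset.Ioc i k, (1 - β j)
      = (1 - β (i+1)) * ∏ j ∈ Finset.Ioc (i+1) k, (1 - β j) := by
  rw [← Finset.Icc_add_one_left_eq_Ioc, Finset.Icc_eq_cons_Ioc h, Finset.prod_cons]

private lemma det_abel {E : Type*} [NormedAddCommGroup E] [NormedSpace ℝ E]
    (β : ℕ → ℝ) (d : ℕ → E) (k : ℕ) :
    ∑ i ∈ range (k+1), (∏ j ∈ Finset.Ioc i k, (1 - β j)) • d i
      = (∑ i ∈ range (k+1), d i)
        - ∑ i ∈ range k, (β (i+1) * ∏ j ∈ Finset.Ioc (i+1) k, (1 - β j)) •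
            (∑ t ∈ range (i+1), d t) := by
  induction k with
  | zero => simp
  | succ k ih =>
    have hπ : ∀ i ≤ k, ∏ j ∈ Finset.Ioc i (k+1), (1 - β j)
        = (∏ j ∈ Finset.Ioc i k, (1 - β j)) * (1 - β (k+1)) := by
      intro i hi
      rw [Finset.prod_Ioc_succ_top hi]
    have hL : ∑ i ∈ range (k+2), (∏ j ∈ Finset.Ioc i (k+1), (1 - β j)) • d i
        = (1 - β (k+1)) • (∑ i ∈ range (k+1), (∏ j ∈ Finset.Ioc i k, (1 - β j)) • d i)
          + d (k+1) := by
      rw [Finset.sum_range_succ, Finset.smul_sum]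
      congr 1
      · refine Finset.sum_congr rfl fun i hi => ?_
        rw [hπ i (by have := Finset.mem_range.mp hi; omega), smul_smul, mul_comm]
      · simp
    rw [hL, ih]
    rw [Finset.sum_range_succ (fun i => (β (i+1) * ∏ j ∈ Finset.Ioc (i+1) (k+1), (1 - β j)) •
            (∑ t ∈ range (i+1), d t))]
    have h1 : ∀ i ∈ range k, (β (i+1) * ∏ j ∈ Finset.Ioc (i+1) (k+1), (1 - β j)) •
            (∑ t ∈ range (i+1), d t)
        = (1 - β (k+1)) • ((β (i+1) * ∏ j ∈ Finset.Ioc (i+1) k, (1 - β j)) •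
            (∑ t ∈ range (i+1), d t)) := by
      intro i hi
      rw [hπ (i+1) (by have := Finset.mem_range.mp hi; omega), smul_smul]
      congr 1
      ring
    rw [Finset.sum_congr rfl h1, ← Finset.smul_sum]
    simp only [Finset.Ioc_self, Finset.prod_empty, mul_one]
    rw [Finset.sum_range_succ d (k+1)]
    set A := ∑ i ∈ range k, (β (i+1) * ∏ j ∈ Finset.Ioc (i+1) k, (1 - β j)) •
            (∑ t ∈ range (i+1), d t)
    set S := ∑ i ∈ range (k+1), d i
    module

private lemma det_weight (β : ℕ → ℝ) (k : ℕ) :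
    ∑ i ∈ range k, β (i+1) * ∏ j ∈ Finset.Ioc (i+1) k, (1 - β j)
      = 1 - ∏ j ∈ Finset.Ioc 0 k, (1 - β j) := by
  have h : ∀ i ∈ range k, β (i+1) * ∏ j ∈ Finset.Ioc (i+1) k, (1 - β j)
      = (∏ j ∈ Finset.Ioc (i+1) k, (1 - β j)) - ∏ j ∈ Finset.Ioc i k, (1 - β j) := by
    intro i hi
    rw [prod_step β (Finset.mem_range.mp hi)]
    ring
  rw [Finset.sum_congr rfl h, Finset.sum_range_sub (fun i => ∏ j ∈ Finset.Ioc i k, (1 - β j))]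
  simp
private lemma det_toeplitz {E : Type*} [NormedAddCommGroup E] [NormedSpace ℝ E]
    (β : ℕ → ℝ) (N₀ : ℕ) (hβ0 : ∀ j, N₀ ≤ j → 0 ≤ β j ∧ β j ≤ 1)
    (hprod : ∀ N, Tendsto (fun k => ∏ j ∈ Finset.Ioc N k, (1 - β j)) atTop (nhds 0))
    (s : ℕ → E) (L : E) (hs : Tendsto s atTop (nhds L)) :
    Tendsto (fun k => ∑ i ∈ range k,
      (β (i+1) * ∏ j ∈ Finset.Ioc (i+1) k, (1 - β j)) • (s i - L)) atTop (nhds 0) := by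
  -- nonnegativity of partial products beyond N₀
  have hπ0 : ∀ N k, N₀ ≤ N → 0 ≤ ∏ j ∈ Finset.Ioc N k, (1 - β j) := by
    intro N k hN
    refine Finset.prod_nonneg fun j hj => ?_
    have hj' := (Finset.mem_Ioc.mp hj).1
    have := (hβ0 j (by omega)).2
    linarith
  have hπ1 : ∀ N k, N₀ ≤ N → ∏ j ∈ Finset.Ioc N k, (1 - β j) ≤ 1 := by
    intro N k hN
    refine Finset.prod_le_one (fun j hj => ?_) (fun j hj => ?_)
    · have hj' := (Finset.mem_Ioc.mp hj).1
      have := (hβ0 j (by omega)).2; linarith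
    · have hj' := (Finset.mem_Ioc.mp hj).1
      have := (hβ0 j (by omega)).1; linarith
  rw [NormedAddCommGroup.tendsto_nhds_zero]
  intro ε hε
  -- choose M
  have hε3 : (0:ℝ) < ε/3 := by linarith
  obtain ⟨M₁, hM₁⟩ := (Metric.tendsto_atTop.mp hs) (ε/3) hε3
  set M := max M₁ N₀ with hM
  -- the head sum tends to 0
  have hA : Tendsto (fun k => ∑ i ∈ range M,
      (β (i+1) * ∏ j ∈ Finset.Ioc (i+1) k, (1 - β j)) • (s i - L)) atTop (nhds 0) := by
    have : Tendsto (fun k => ∑ i ∈ range M,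
        (β (i+1) * ∏ j ∈ Finset.Ioc (i+1) k, (1 - β j)) • (s i - L)) atTop
        (nhds (∑ i ∈ range M, (0:E))) := by
      refine tendsto_finset_sum _ fun i _ => ?_
      have h1 : Tendsto (fun k => β (i+1) * ∏ j ∈ Finset.Ioc (i+1) k, (1 - β j)) atTop
          (nhds (β (i+1) * 0)) := (hprod (i+1)).const_mul _
      rw [mul_zero] at h1
      have := h1.smul_const (s i - L)
      rwa [zero_smul] at this
    simpa using this
  have hA' := (NormedAddCommGroup.tendsto_nhds_zero.mp hA) (ε/3) hε3
  filter_upwards [hA', eventually_ge_atTop M] with k hAk hkM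
  -- split the sum
  have hsplit : ∑ i ∈ range k, (β (i+1) * ∏ j ∈ Finset.Ioc (i+1) k, (1 - β j)) • (s i - L)
      = (∑ i ∈ range M, (β (i+1) * ∏ j ∈ Finset.Ioc (i+1) k, (1 - β j)) • (s i - L))
        + ∑ i ∈ Finset.Ico M k, (β (i+1) * ∏ j ∈ Finset.Ioc (i+1) k, (1 - β j)) • (s i - L) := by
    rw [Finset.range_eq_Ico, ← Finset.sum_Ico_consecutive _ (Nat.zero_le M) hkM,
      ← Finset.range_eq_Ico]
  rw [hsplit]
  have htail : ‖∑ i ∈ Finset.Ico M k, (β (i+1) * ∏ j ∈ Finset.Ioc (i+1) k, (1 - β j)) • (s i - L)‖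
      ≤ ε/3 := by
    calc ‖∑ i ∈ Finset.Ico M k, (β (i+1) * ∏ j ∈ Finset.Ioc (i+1) k, (1 - β j)) • (s i - L)‖
        ≤ ∑ i ∈ Finset.Ico M k, ‖(β (i+1) * ∏ j ∈ Finset.Ioc (i+1) k, (1 - β j)) • (s i - L)‖ :=
          norm_sum_le _ _
      _ ≤ ∑ i ∈ Finset.Ico M k, (β (i+1) * ∏ j ∈ Finset.Ioc (i+1) k, (1 - β j)) * (ε/3) := by
          refine Finset.sum_le_sum fun i hi => ?_
          obtain ⟨hiM, hik⟩ := Finset.mem_Ico.mp hi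
          have hw0 : 0 ≤ β (i+1) * ∏ j ∈ Finset.Ioc (i+1) k, (1 - β j) :=
            mul_nonneg (hβ0 (i+1) (by omega)).1 (hπ0 (i+1) k (by omega))
          rw [norm_smul, Real.norm_eq_abs, abs_of_nonneg hw0]
          refine mul_le_mul_of_nonneg_left ?_ hw0
          exact le_of_lt (by simpa [dist_eq_norm] using hM₁ i (le_trans (le_max_left _ _) hiM))
      _ = (∑ i ∈ Finset.Ico M k, β (i+1) * ∏ j ∈ Finset.Ioc (i+1) k, (1 - β j)) * (ε/3) := by
          rw [Finset.sum_mul]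
      _ ≤ 1 * (ε/3) := by
          refine mul_le_mul_of_nonneg_right ?_ (le_of_lt hε3)
          have htel : ∀ i ∈ Finset.Ico M k, β (i+1) * ∏ j ∈ Finset.Ioc (i+1) k, (1 - β j)
              = (∏ j ∈ Finset.Ioc (i+1) k, (1 - β j)) - ∏ j ∈ Finset.Ioc i k, (1 - β j) := by
            intro i hi
            rw [prod_step β (Finset.mem_Ico.mp hi).2]; ring
          rw [Finset.sum_congr rfl htel, Finset.sum_Ico_eq_sub _ hkM,
            Finset.sum_range_sub (fun i => ∏ j ∈ Finset.Ioc i k, (1 - β j)),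
            Finset.sum_range_sub (fun i => ∏ j ∈ Finset.Ioc i k, (1 - β j))]
          simp only [Finset.Ioc_self, Finset.prod_empty]
          have h1 := hπ0 M k (le_max_right _ _)
          have h2 := hπ1 M k (le_max_right _ _)
          -- (1 - π0k) - (πMk - π0k) = 1 - πMk ≤ 1
          linarith
      _ = ε/3 := one_mul _
  calc ‖(∑ i ∈ range M, (β (i+1) * ∏ j ∈ Finset.Ioc (i+1) k, (1 - β j)) • (s i - L))
        + ∑ i ∈ Finset.Ico M k, (β (i+1) * ∏ j ∈ Finset.Ioc (i+1) k, (1 - β j)) • (s i - L)‖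
      ≤ ‖∑ i ∈ range M, (β (i+1) * ∏ j ∈ Finset.Ioc (i+1) k, (1 - β j)) • (s i - L)‖
        + ‖∑ i ∈ Finset.Ico M k, (β (i+1) * ∏ j ∈ Finset.Ioc (i+1) k, (1 - β j)) • (s i - L)‖ :=
        norm_add_le _ _
    _ < ε/3 + ε/3 := by exact add_lt_add_of_lt_of_le hAk htail
    _ < ε := by linarith
private lemma det_main {E : Type*} [NormedAddCommGroup E] [NormedSpace ℝ E]
    (β : ℕ → ℝ) (N₀ : ℕ) (hβ0 : ∀ j, N₀ ≤ j → 0 ≤ β j ∧ β j ≤ 1)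
    (hprod : ∀ N, Tendsto (fun k => ∏ j ∈ Finset.Ioc N k, (1 - β j)) atTop (nhds 0))
    (d : ℕ → E) (L : E)
    (hs : Tendsto (fun n => ∑ i ∈ range (n+1), d i) atTop (nhds L)) :
    Tendsto (fun k => ∑ i ∈ range (k+1), (∏ j ∈ Finset.Ioc i k, (1 - β j)) • d i)
      atTop (nhds 0) := by
  set s : ℕ → E := fun n => ∑ i ∈ range (n+1), d i with hsdef
  have key : ∀ k, ∑ i ∈ range (k+1), (∏ j ∈ Finset.Ioc i k, (1 - β j)) • d i
      = (s k - L)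
        - (∑ i ∈ range k, (β (i+1) * ∏ j ∈ Finset.Ioc (i+1) k, (1 - β j)) • (s i - L))
        + (∏ j ∈ Finset.Ioc 0 k, (1 - β j)) • L := by
    intro k
    rw [det_abel β d k]
    have hexp : ∑ i ∈ range k, (β (i+1) * ∏ j ∈ Finset.Ioc (i+1) k, (1 - β j)) • s i
        = (∑ i ∈ range k, (β (i+1) * ∏ j ∈ Finset.Ioc (i+1) k, (1 - β j)) • (s i - L))
          + (∑ i ∈ range k, β (i+1) * ∏ j ∈ Finset.Ioc (i+1) k, (1 - β j)) • L := by
      rw [Finset.sum_smul, ← Finset.sum_add_distrib]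
      refine Finset.sum_congr rfl fun i _ => ?_
      rw [smul_sub]; abel
    have : ∑ i ∈ range k, (β (i+1) * ∏ j ∈ Finset.Ioc (i+1) k, (1 - β j)) •
            (∑ t ∈ range (i+1), d t)
        = ∑ i ∈ range k, (β (i+1) * ∏ j ∈ Finset.Ioc (i+1) k, (1 - β j)) • s i := rfl
    rw [this, hexp, det_weight β k, sub_smul, one_smul]
    abel
  have h1 : Tendsto (fun k => s k - L) atTop (nhds 0) := by
    simpa using hs.sub_const L
  have h2 := det_toeplitz β N₀ hβ0 hprod s L hs
  have h3 : Tendsto (fun k => (∏ j ∈ Finset.Ioc 0 k, (1 - β j)) • L) atTop (nhds 0) := by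
    have := (hprod 0).smul_const L
    rwa [zero_smul] at this
  have := (h1.sub h2).add h3
  rw [show (0:E) - 0 + 0 = 0 by abel] at this
  exact this.congr fun k => (key k).symm
private lemma hprod_lemma (ι₂ b₂ : ℝ) (hι₂ : 0 < ι₂) (hb2 : b₂ ≤ 1)
    (β : ℕ → ℝ) (hβ : ∀ k, β k = ι₂ * ((k:ℝ)+1) ^ (-b₂)) (N₀ : ℕ)
    (hβ1 : ∀ j, N₀ ≤ j → β j ≤ 1) :
    ∀ N, Tendsto (fun k => ∏ j ∈ Finset.Ioc N k, (1 - β j)) atTop (nhds 0) := by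
  have hβlow : ∀ j : ℕ, ι₂ * (1/((j:ℝ)+1)) ≤ β j := by
    intro j
    rw [hβ j]
    refine mul_le_mul_of_nonneg_left ?_ (le_of_lt hι₂)
    have h1 : (1:ℝ) ≤ (j:ℝ) + 1 := le_add_of_nonneg_left (Nat.cast_nonneg j)
    have := Real.rpow_le_rpow_of_exponent_le h1 (neg_le_neg hb2)
    calc (1:ℝ)/((j:ℝ)+1) = ((j:ℝ)+1) ^ (-1 : ℝ) := by
          rw [Real.rpow_neg_one, one_div]
      _ ≤ ((j:ℝ)+1) ^ (-b₂) := this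
  have hβpos : ∀ j : ℕ, 0 < β j := by
    intro j; rw [hβ j]; positivity
  -- core case: N ≥ N₀
  have core : ∀ N, N₀ ≤ N → Tendsto (fun k => ∏ j ∈ Finset.Ioc N k, (1 - β j)) atTop (nhds 0) := by
    intro N hN
    have hnn : ∀ k, 0 ≤ ∏ j ∈ Finset.Ioc N k, (1 - β j) := by
      intro k
      refine Finset.prod_nonneg fun j hj => ?_
      have := hβ1 j (by have := (Finset.mem_Ioc.mp hj).1; omega)
      linarith
    have hub : ∀ k, ∏ j ∈ Finset.Ioc N k, (1 - β j)
        ≤ Real.exp (-(∑ j ∈ Finset.Ioc N k, β j)) := by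
      intro k
      calc ∏ j ∈ Finset.Ioc N k, (1 - β j)
          ≤ ∏ j ∈ Finset.Ioc N k, Real.exp (-(β j)) := by
            refine Finset.prod_le_prod (fun j hj => ?_) (fun j hj => ?_)
            · have := hβ1 j (by have := (Finset.mem_Ioc.mp hj).1; omega); linarith
            · have := Real.add_one_le_exp (-(β j)); linarith
        _ = Real.exp (∑ j ∈ Finset.Ioc N k, -(β j)) := (Real.exp_sum _ _).symm
        _ = Real.exp (-(∑ j ∈ Finset.Ioc N k, β j)) := by rw [Finset.sum_neg_distrib]
    have hS : Tendsto (fun k => ∑ j ∈ Finset.Ioc N k, β j) atTop atTop := by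
      have hH : Tendsto (fun k => ∑ j ∈ Finset.Ioc N k, (1/((j:ℝ)+1))) atTop atTop := by
        have t1 : Tendsto (fun k : ℕ => ∑ i ∈ Finset.range (k+1), (1/((i:ℝ)+1)))
            atTop atTop :=
          Real.tendsto_sum_range_one_div_nat_succ_atTop.comp (tendsto_add_atTop_nat 1)
        have t2 : Tendsto (fun k : ℕ => (∑ i ∈ Finset.range (k+1), (1/((i:ℝ)+1)))
            - ∑ i ∈ Finset.range (N+1), (1/((i:ℝ)+1))) atTop atTop :=
          tendsto_atTop_add_const_right _ _ t1
        refine t2.congr' ?_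
        filter_upwards [eventually_ge_atTop N] with k hk
        rw [← Finset.Ico_add_one_add_one_eq_Ioc, Finset.sum_Ico_eq_sub _ (by omega : N+1 ≤ k+1)]
      have comp : ∀ k, ι₂ * (∑ j ∈ Finset.Ioc N k, (1/((j:ℝ)+1)))
          ≤ ∑ j ∈ Finset.Ioc N k, β j := by
        intro k
        rw [Finset.mul_sum]
        exact Finset.sum_le_sum fun j _ => hβlow j
      exact tendsto_atTop_mono comp (hH.const_mul_atTop hι₂)
    have hexp : Tendsto (fun k => Real.exp (-(∑ j ∈ Finset.Ioc N k, β j))) atTop (nhds 0) :=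
      Real.tendsto_exp_atBot.comp (tendsto_neg_atBot_iff.mpr hS)
    exact squeeze_zero hnn hub hexp
  intro N
  set N' := max N N₀ with hN'
  have hsplit : ∀ᶠ k in atTop, (∏ j ∈ Finset.Ioc N N', (1 - β j)) *
      (∏ j ∈ Finset.Ioc N' k, (1 - β j)) = ∏ j ∈ Finset.Ioc N k, (1 - β j) := by
    filter_upwards [eventually_ge_atTop N'] with k hk
    exact Finset.prod_Ioc_consecutive _ (le_max_left _ _) hk
  have := ((core N' (le_max_right _ _)).const_mul (∏ j ∈ Finset.Ioc N N', (1 - β j))).congr' hsplit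
  rwa [mul_zero] at this

private lemma coord_sq_le {d : ℕ} (x : EuclideanSpace ℝ (Fin d)) (l : Fin d) :
    (x l)^2 ≤ ‖x‖^2 := by
  have h : ‖x‖^2 = ∑ i, ‖x i‖^2 := by
    rw [EuclideanSpace.norm_eq, Real.sq_sqrt]
    positivity
  rw [h]
  have := Finset.single_le_sum (f := fun i => ‖x i‖^2) (fun i _ => by positivity)
    (Finset.mem_univ l)
  simpa [Real.norm_eq_abs, sq_abs] using this

private lemma mart_conv {d : ℕ} {Ωs : Type*} {mΩ : MeasurableSpace Ωs} {μ : Measure Ωs}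
    [IsProbabilityMeasure μ] (F : Filtration ℕ mΩ)
    (ξ : ℕ → Ωs → EuclideanSpace ℝ (Fin d)) (hadapted : Adapted F ξ)
    (hint : ∀ k, Integrable (ξ k) μ) (hint2 : ∀ k, Integrable (fun ω => ‖ξ k ω‖ ^ 2) μ)
    (σ : ℝ) (hvar0 : ∫ ω, ‖ξ 0 ω‖ ^ 2 ∂μ ≤ σ ^ 2)
    (hvar : ∀ k, μ[fun ω => ‖ξ (k + 1) ω‖ ^ 2 | F k] ≤ᵐ[μ] fun _ => σ ^ 2)
    (hmean : ∀ k, μ[ξ (k + 1) | F k] =ᵐ[μ] 0)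
    (β : ℕ → ℝ) (B : ℝ) (hsum : ∀ n, ∑ i ∈ range (n+1), (β i)^2 ≤ B) :
    ∀ᵐ ω ∂μ, ∃ L, Tendsto (fun n => ∑ i ∈ range (n+1), β i • ξ i ω) atTop (nhds L) := by
  have hσ : (0:ℝ) ≤ σ^2 := le_trans (by positivity) hvar0
  have hprojmeas : ∀ (i : ℕ) (l : Fin d), StronglyMeasurable[F i] (fun ω => ξ i ω l) :=
    fun i l => (EuclideanSpace.proj (𝕜 := ℝ) l).continuous.comp_stronglyMeasurable (hadapted i).stronglyMeasurable
  -- integrability of squared coordinates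
  have hXsq : ∀ (i : ℕ) (l : Fin d), Integrable (fun ω => (ξ i ω l)^2) μ := by
    intro i l
    refine Integrable.mono (hint2 i) (((hprojmeas i l).mono (F.le i)).aestronglyMeasurable.pow 2)
      (Eventually.of_forall fun ω => ?_)
    have := coord_sq_le (ξ i ω) l
    simp only [Real.norm_eq_abs]
    rw [abs_of_nonneg (sq_nonneg _), abs_of_nonneg (by positivity : (0:ℝ) ≤ ‖ξ i ω‖^2)]
    exact this
  -- second moments of coordinates
  have hXvar : ∀ i l, ∫ ω, (ξ i ω l)^2 ∂μ ≤ σ^2 := by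
    intro i l
    have h1 : ∫ ω, (ξ i ω l)^2 ∂μ ≤ ∫ ω, ‖ξ i ω‖^2 ∂μ :=
      integral_mono (hXsq i l) (hint2 i) (fun ω => coord_sq_le (ξ i ω) l)
    refine h1.trans ?_
    cases i with
    | zero => exact hvar0
    | succ n =>
      have h2 : ∫ ω, ‖ξ (n+1) ω‖^2 ∂μ = ∫ ω, (μ[fun ω => ‖ξ (n + 1) ω‖ ^ 2 | F n]) ω ∂μ :=
        (integral_condExp (F.le n)).symm
      rw [h2]
      calc ∫ ω, (μ[fun ω => ‖ξ (n + 1) ω‖ ^ 2 | F n]) ω ∂μ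
          ≤ ∫ _ω, σ^2 ∂μ := integral_mono_ae integrable_condExp (integrable_const _) (hvar n)
        _ = σ^2 := by simp
  -- fix a coordinate
  have key : ∀ l : Fin d, ∀ᵐ ω ∂μ, ∃ c : ℝ,
      Tendsto (fun n => ∑ i ∈ range (n+1), β i * ξ i ω l) atTop (nhds c) := by
    intro l
    set X : ℕ → Ωs → ℝ := fun i ω => ξ i ω l with hX
    have hXmeas : ∀ i, StronglyMeasurable[F i] (X i) := fun i => hprojmeas i l
    have hXint : ∀ i, Integrable (X i) μ := by
      intro i
      exact (EuclideanSpace.proj (𝕜 := ℝ) l).integrable_comp (hint i)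
    have hXL2 : ∀ i, MemLp (X i) 2 μ := fun i =>
      (memLp_two_iff_integrable_sq
        ((hXmeas i).mono (F.le i)).aestronglyMeasurable).mpr (hXsq i l)
    set f : ℕ → Ωs → ℝ := fun n ω => ∑ i ∈ range (n+1), β i * X i ω with hf
    have hfadp : StronglyAdapted F f := by
      intro n
      refine Finset.stronglyMeasurable_fun_sum _ fun i hi => ?_
      have hin : i ≤ n := by have := Finset.mem_range.mp hi; omega
      exact ((hXmeas i).mono (F.mono hin)).const_mul _
    have hfint : ∀ n, Integrable (f n) μ := by
      intro n
      exact integrable_finset_sum _ fun i _ => (hXint i).const_mul _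
    have hfL2 : ∀ n, MemLp (f n) 2 μ := by
      intro n
      exact memLp_finsetSum _ fun i _ => ((hXL2 i).const_mul _)
    -- conditional mean of coordinates is zero
    have hzero : ∀ n, μ[X (n+1) | F n] =ᵐ[μ] 0 := by
      intro n
      refine (ae_eq_condExp_of_forall_setIntegral_eq (F.le n) (hXint (n+1))
        (fun s _ _ => integrableOn_zero) (fun s hs hμs => ?_)
        stronglyMeasurable_zero.aestronglyMeasurable).symm
      rw [integral_zero]
      have h1 : ∫ ω in s, X (n+1) ω ∂μ
          = (EuclideanSpace.proj (𝕜 := ℝ) l) (∫ ω in s, ξ (n+1) ω ∂μ) :=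
        ContinuousLinearMap.integral_comp_comm (EuclideanSpace.proj (𝕜 := ℝ) l)
          ((hint (n+1)).restrict)
      have h2 : ∫ ω in s, ξ (n+1) ω ∂μ = 0 := by
        rw [← setIntegral_condExp (F.le n) (hint (n+1)) hs]
        rw [setIntegral_congr_ae (F.le n s hs) ((hmean n).mono fun ω hω _ => hω)]
        simp
      rw [h1, h2]
      simp
    -- martingale property
    have hmart : Martingale f F μ := by
      refine martingale_nat hfadp hfint fun n => ?_
      have hstep : f (n+1) = f n + fun ω => β (n+1) * X (n+1) ω := by
        funext ω
        simp only [hf]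
        rw [Finset.sum_range_succ]
        rfl
      have h1 := condExp_add (m := F n) (hfint n) ((hXint (n+1)).const_mul (β (n+1)))
      have heq : μ[f n | F n] = f n :=
        condExp_of_stronglyMeasurable (F.le n) (hfadp n) (hfint n)
      have h3 : μ[(fun ω => β (n+1) * X (n+1) ω) | F n] =ᵐ[μ] 0 := by
        have hsm : (fun ω => β (n+1) * X (n+1) ω) = β (n+1) • X (n+1) := rfl
        rw [hsm]
        calc μ[β (n+1) • X (n+1) | F n]
            =ᵐ[μ] β (n+1) • μ[X (n+1) | F n] := condExp_smul _ _ _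
          _ =ᵐ[μ] (0 : Ωs → ℝ) := by
              filter_upwards [hzero n] with ω hω
              simp [hω]
      filter_upwards [h1, h3] with ω hω1 hω3
      rw [hstep, hω1]
      simp only [Pi.add_apply, heq, hω3, Pi.zero_apply, add_zero]
    -- second moment bound by induction
    have hV : ∀ n, ∫ ω, (f n ω)^2 ∂μ ≤ σ^2 * ∑ i ∈ range (n+1), (β i)^2 := by
      intro n
      induction n with
      | zero =>
        have h0 : f 0 = fun ω => β 0 * X 0 ω := by
          funext ω; simp [hf]
        rw [h0]
        have heq : ∫ ω, (β 0 * X 0 ω)^2 ∂μ = (β 0)^2 * ∫ ω, (X 0 ω)^2 ∂μ := by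
          rw [← integral_const_mul]
          congr 1; funext ω; ring
        have hs1 : ∑ i ∈ range (0+1), (β i)^2 = (β 0)^2 := by simp
        rw [heq, hs1]
        calc (β 0)^2 * ∫ ω, (X 0 ω)^2 ∂μ ≤ (β 0)^2 * σ^2 :=
              mul_le_mul_of_nonneg_left (hXvar 0 l) (by positivity)
          _ = σ^2 * (β 0)^2 := by ring
      | succ n ih =>
        set c := β (n+1) with hc
        -- cross term is zero
        have hprodint : Integrable (fun ω => f n ω * X (n+1) ω) μ := by
          have h := ((hXL2 (n+1)).smul (hfL2 n) (r := 1))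
          have h2 := memLp_one_iff_integrable.mp h
          exact h2
        have hcross : ∫ ω, f n ω * X (n+1) ω ∂μ = 0 := by
          have h1 : ∫ ω, f n ω * X (n+1) ω ∂μ
              = ∫ ω, (μ[fun ω => f n ω * X (n+1) ω | F n]) ω ∂μ :=
            (integral_condExp (F.le n)).symm
          have h2 : μ[fun ω => f n ω * X (n+1) ω | F n] =ᵐ[μ] fun ω => f n ω * 0 := by
            have hpull := condExp_mul_of_stronglyMeasurable_left (m := F n) (hfadp n) hprodint
              (hXint (n+1))
            calc μ[fun ω => f n ω * X (n+1) ω | F n]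
                =ᵐ[μ] f n * μ[X (n+1) | F n] := hpull
              _ =ᵐ[μ] fun ω => f n ω * 0 := by
                  filter_upwards [hzero n] with ω hω
                  simp [hω]
          rw [h1, integral_congr_ae h2]
          simp
        have hXsqint : Integrable (fun ω => (X (n+1) ω)^2) μ := (hXL2 (n+1)).integrable_sq
        have hfsqint : Integrable (fun ω => (f n ω)^2) μ := (hfL2 n).integrable_sq
        have hexp : (fun ω => (f (n+1) ω)^2)
            = fun ω => (f n ω)^2 + ((2*c) * (f n ω * X (n+1) ω) + c^2 * (X (n+1) ω)^2) := by
          funext ω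
          have hsucc : f (n+1) ω = f n ω + c * X (n+1) ω := by
            simp only [hf]
            rw [Finset.sum_range_succ]
          rw [hsucc]; ring
        have hint1 : Integrable (fun ω => (2*c) * (f n ω * X (n+1) ω)
            + c^2 * (X (n+1) ω)^2) μ :=
          (hprodint.const_mul _).add (hXsqint.const_mul _)
        have hsum2 : ∑ i ∈ range (n+2), (β i)^2
            = ∑ i ∈ range (n+1), (β i)^2 + (β (n+1))^2 := Finset.sum_range_succ _ _
        calc ∫ ω, (f (n+1) ω)^2 ∂μ
            = ∫ ω, ((f n ω)^2 + ((2*c) * (f n ω * X (n+1) ω) + c^2 * (X (n+1) ω)^2)) ∂μ := by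
              rw [hexp]
          _ = (∫ ω, (f n ω)^2 ∂μ) + ((2*c) * ∫ ω, f n ω * X (n+1) ω ∂μ
              + c^2 * ∫ ω, (X (n+1) ω)^2 ∂μ) := by
              rw [integral_add hfsqint hint1,
                integral_add (hprodint.const_mul _) (hXsqint.const_mul _),
                integral_const_mul, integral_const_mul]
          _ ≤ σ^2 * (∑ i ∈ range (n+1), (β i)^2) + ((2*c) * 0 + c^2 * σ^2) := by
              rw [hcross]
              refine add_le_add ih (add_le_add le_rfl ?_)
              exact mul_le_mul_of_nonneg_left (hXvar (n+1) l) (by positivity)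
          _ = σ^2 * ∑ i ∈ range (n+2), (β i)^2 := by
              rw [hsum2]
              ring
    -- L¹ bound
    have hL1 : ∀ n, eLpNorm (f n) 1 μ ≤ ENNReal.ofReal (1 + σ^2 * B) := by
      intro n
      have habs : ∫ ω, |f n ω| ∂μ ≤ 1 + σ^2 * B := by
        have h1 : ∫ ω, |f n ω| ∂μ ≤ ∫ ω, (1 + (f n ω)^2) ∂μ := by
          refine integral_mono (hfint n).abs ((integrable_const 1).add (hfL2 n).integrable_sq)
            fun ω => ?_
          nlinarith [sq_abs (f n ω), abs_nonneg (f n ω), sq_nonneg (|f n ω| - 1)]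
        have h2 : ∫ ω, (1 + (f n ω)^2) ∂μ = 1 + ∫ ω, (f n ω)^2 ∂μ := by
          rw [integral_add (integrable_const 1) (hfL2 n).integrable_sq]
          simp
        have h3 : σ^2 * ∑ i ∈ range (n+1), (β i)^2 ≤ σ^2 * B :=
          mul_le_mul_of_nonneg_left (hsum n) hσ
        calc ∫ ω, |f n ω| ∂μ ≤ 1 + ∫ ω, (f n ω)^2 ∂μ := by rw [← h2]; exact h1
          _ ≤ 1 + σ^2 * B := by linarith [hV n]
      have h4 : eLpNorm (f n) 1 μ = ENNReal.ofReal (∫ ω, ‖f n ω‖ ∂μ) := by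
        rw [eLpNorm_one_eq_lintegral_enorm, ← ofReal_integral_norm_eq_lintegral_enorm (hfint n)]
      rw [h4]
      refine ENNReal.ofReal_le_ofReal ?_
      simpa [Real.norm_eq_abs] using habs
    -- martingale convergence
    have hconv := hmart.submartingale.ae_tendsto_limitProcess
      (R := (1 + σ^2 * B).toNNReal) (fun n => by
        simpa [ENNReal.ofReal] using hL1 n)
    filter_upwards [hconv] with ω hω
    exact ⟨_, hω⟩
  -- combine coordinates
  have hall : ∀ᵐ ω ∂μ, ∀ l : Fin d, ∃ c : ℝ,
      Tendsto (fun n => ∑ i ∈ range (n+1), β i * ξ i ω l) atTop (nhds c) :=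
    ae_all_iff.mpr key
  filter_upwards [hall] with ω hω
  choose g hg using hω
  refine ⟨(EuclideanSpace.equiv (Fin d) ℝ).symm g, ?_⟩
  have hcoord : Tendsto (fun n => (EuclideanSpace.equiv (Fin d) ℝ)
      (∑ i ∈ range (n+1), β i • ξ i ω)) atTop (nhds g) := by
    rw [tendsto_pi_nhds]
    intro l
    have hrw : ∀ n, (EuclideanSpace.equiv (Fin d) ℝ) (∑ i ∈ range (n+1), β i • ξ i ω) l
        = ∑ i ∈ range (n+1), β i * ξ i ω l := by
      intro n
      have h5 : (EuclideanSpace.equiv (Fin d) ℝ) (∑ i ∈ range (n+1), β i • ξ i ω) l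
          = (EuclideanSpace.proj (𝕜 := ℝ) l) (∑ i ∈ range (n+1), β i • ξ i ω) := rfl
      rw [h5, map_sum]
      refine Finset.sum_congr rfl fun i _ => ?_
      simp
    simp only [hrw]
    exact hg l
  have hfin := ((EuclideanSpace.equiv (Fin d) ℝ).symm.continuous.tendsto g).comp hcoord
  exact hfin.congr fun n => (EuclideanSpace.equiv (Fin d) ℝ).symm_apply_apply _

/-- Almost-sure convergence of the momentum averaging of martingale-difference noise.
Let `(ξ_k)` be adapted to a filtration `(F_k)` with `E[ξ_{k+1} | F_k] = 0` (and
`E[ξ_0] = 0`), and conditional second moments bounded by `σ²`. With weights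
`β_k = ι₂ (k+1)^{−b₂}`, `ι₂ > 0`, `b₂ ∈ (1/2, 1]`, the weighted sum
`W_k = ∑_{i=0}^{k} (∏_{j=i+1}^{k} (1−β_j)) β_i ξ_i` converges to `0` almost surely. -/
theorem momentum_noise_vanishes_as {d : ℕ}
    {Ωs : Type*} {mΩ : MeasurableSpace Ωs} {μ : Measure Ωs} [IsProbabilityMeasure μ]
    (F : Filtration ℕ mΩ)
    (ξ : ℕ → Ωs → EuclideanSpace ℝ (Fin d))
    (hadapted : Adapted F ξ)
    (hint : ∀ k, Integrable (ξ k) μ)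
    (hint2 : ∀ k, Integrable (fun ω => ‖ξ k ω‖ ^ 2) μ)
    (σ : ℝ)
    (hmean0 : ∫ ω, ξ 0 ω ∂μ = 0)
    (hmean : ∀ k, μ[ξ (k + 1) | F k] =ᵐ[μ] 0)
    (hvar0 : ∫ ω, ‖ξ 0 ω‖ ^ 2 ∂μ ≤ σ ^ 2)
    (hvar : ∀ k, μ[fun ω => ‖ξ (k + 1) ω‖ ^ 2 | F k] ≤ᵐ[μ] fun _ => σ ^ 2)
    (ι₂ b₂ : ℝ) (hι₂ : 0 < ι₂) (hb₂ : b₂ ∈ Set.Ioc (1 / 2 : ℝ) 1)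
    (β : ℕ → ℝ) (hβ : ∀ k, β k = ι₂ * ((k : ℝ) + 1) ^ (-b₂)) :
    ∀ᵐ ω ∂μ, Tendsto
      (fun k => ∑ i ∈ Finset.range (k + 1),
        ((∏ j ∈ Finset.Ioc i k, (1 - β j)) * β i) • ξ i ω)
      atTop (nhds 0) := by
  obtain ⟨hb₂half, hb₂one⟩ := hb₂
  have hb₂pos : 0 < b₂ := lt_trans (by norm_num) hb₂half
  -- β is positive and tends to zero
  have hβpos : ∀ j, 0 < β j := by
    intro j; rw [hβ j]; positivity
  have hβtend : Tendsto β atTop (nhds 0) := by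
    have h1 : Tendsto (fun j : ℕ => ((j:ℝ)+1)) atTop atTop :=
      tendsto_atTop_add_const_right _ 1 tendsto_natCast_atTop_atTop
    have h2 : Tendsto (fun x : ℝ => x ^ (-b₂)) atTop (nhds 0) :=
      tendsto_rpow_neg_atTop hb₂pos
    have h3 := (h2.comp h1).const_mul ι₂
    rw [mul_zero] at h3
    refine h3.congr fun j => ?_
    rw [hβ j]
    rfl
  -- eventually β ≤ 1
  obtain ⟨N₀, hN₀⟩ : ∃ N₀, ∀ j, N₀ ≤ j → β j ≤ 1 := by
    have := hβtend.eventually (eventually_le_nhds (by norm_num : (0:ℝ) < 1))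
    obtain ⟨N₀, hN₀⟩ := eventually_atTop.mp this
    exact ⟨N₀, hN₀⟩
  have hβ0 : ∀ j, N₀ ≤ j → 0 ≤ β j ∧ β j ≤ 1 :=
    fun j hj => ⟨le_of_lt (hβpos j), hN₀ j hj⟩
  have hprod := hprod_lemma ι₂ b₂ hι₂ hb₂one β hβ N₀ hN₀
  -- summability of β²
  have hsummable : Summable (fun i : ℕ => (β i)^2) := by
    have h1 : Summable (fun n : ℕ => (n:ℝ) ^ (-b₂ * 2)) :=
      Real.summable_nat_rpow.mpr (by linarith)
    have h2 : Summable (fun n : ℕ => (((n+1):ℕ):ℝ) ^ (-b₂ * 2)) :=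
      (summable_nat_add_iff 1).mpr h1
    have h3 : Summable (fun n : ℕ => ((n:ℝ)+1) ^ (-b₂ * 2)) := by
      refine h2.congr fun n => ?_
      push_cast
      ring_nf
    have h4 := h3.mul_left (ι₂^2)
    refine h4.congr fun i => ?_
    rw [hβ i]
    have hx : (0:ℝ) ≤ (i:ℝ)+1 := by positivity
    rw [mul_pow, ← Real.rpow_natCast (((i:ℝ)+1) ^ (-b₂)) 2, ← Real.rpow_mul hx]
    norm_num
  set B : ℝ := ∑' i, (β i)^2 with hB
  have hsum : ∀ n, ∑ i ∈ range (n+1), (β i)^2 ≤ B :=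
    fun n => Summable.sum_le_tsum _ (fun i _ => sq_nonneg _) hsummable
  -- martingale convergence
  have hconv := mart_conv F ξ hadapted hint hint2 σ hvar0 hvar hmean β B hsum
  filter_upwards [hconv] with ω hω
  obtain ⟨L, hL⟩ := hω
  have hmain := det_main β N₀ hβ0 hprod (fun i => β i • ξ i ω) L hL
  refine hmain.congr fun k => ?_
  refine Finset.sum_congr rfl fun i _ => ?_
  rw [mul_smul]
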